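/- arXiv:2510.12312 — 2 statements merged into one kernel-verified Lean document; each statement's English description precedes it below -/
import Mathlib

section
/- Let M = ⟨S, A, P, R, γ⟩ be a finite MDP with γ ∈ [0,1), M̄ = ⟨S̄, A, P̄, R̄, γ⟩ a latent MDP over a finite metric space (S̄, d̄), φ : S → S̄ an encoder, π̄ a latent policy, and π_b a baseline policy with supp π_b(·|s) = supp π̄(·|φ(s)) for all s ∈ S. Let D = max{π̄(a|φ(s))/π_b(a|s) : s ∈ S, a ∈ supp π_b(·|s)} and assume γ·D < 1. Let ξ be a stationary distribution of π_b. Assume the latent model has Lipschitz constants K_R̄, K_P̄ under π̄ with γ·K_P̄ < 1, and set K_V = K_R̄/(1 − γ·K_P̄). Then Σ_s ξ(s)·|V^{π̄∘φ}(s) − V̄^{π̄}(φ(s))| ≤ (L_R + γ·K_V·L_P)/(1/D − γ), where L_R and L_P are the reward and transition losses with respect to ξ and π_b. -/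
open Finset

variable {S A SL : Type*} [Fintype S] [Fintype A] [Fintype SL]

/-- A (stationary, stochastic) policy. -/
def IsPolicy {X : Type*} [Fintype X] (π : X → A → ℝ) : Prop :=
  ∀ x, (∀ a, 0 ≤ π x a) ∧ (∑ a, π x a) = 1

/-- The Wasserstein distance between two distributions on a finite metric
space (infimum of the expected distance over all couplings). -/
noncomputable def Wass [MetricSpace SL] (μ ν : SL → ℝ) : ℝ :=
  sInf { c : ℝ | ∃ lam : SL × SL → ℝ, (∀ p, 0 ≤ lam p) ∧
    (∀ x, (∑ y, lam (x, y)) = μ x) ∧ (∀ y, (∑ x, lam (x, y)) = ν y) ∧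
    c = ∑ p : SL × SL, lam p * dist p.1 p.2 }

section Aux
variable [MetricSpace SL]

def WSet (μ ν : SL → ℝ) : Set ℝ :=
  { c : ℝ | ∃ lam : SL × SL → ℝ, (∀ p, 0 ≤ lam p) ∧
    (∀ x, (∑ y, lam (x, y)) = μ x) ∧ (∀ y, (∑ x, lam (x, y)) = ν y) ∧
    c = ∑ p : SL × SL, lam p * dist p.1 p.2 }

lemma wass_eq (μ ν : SL → ℝ) : Wass μ ν = sInf (WSet μ ν) := rfl

lemma WSet_nonneg {μ ν : SL → ℝ} {c : ℝ} (hc : c ∈ WSet μ ν) : 0 ≤ c := by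
  obtain ⟨lam, h0, -, -, rfl⟩ := hc
  exact Finset.sum_nonneg fun p _ => mul_nonneg (h0 p) dist_nonneg

lemma WSet_nonempty {μ ν : SL → ℝ} (hμ0 : ∀ x, 0 ≤ μ x) (hμ1 : ∑ x, μ x = 1)
    (hν0 : ∀ y, 0 ≤ ν y) (hν1 : ∑ y, ν y = 1) : (WSet μ ν).Nonempty := by
  refine ⟨_, fun p => μ p.1 * ν p.2, fun p => mul_nonneg (hμ0 p.1) (hν0 p.2), ?_, ?_, rfl⟩
  · intro x; simp only; rw [← Finset.mul_sum, hν1, mul_one]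
  · intro y; simp only; rw [← Finset.sum_mul, hμ1, one_mul]

lemma wass_nonneg (μ ν : SL → ℝ) : 0 ≤ Wass μ ν :=
  Real.sInf_nonneg fun _ hc => WSet_nonneg hc

lemma abs_expect_sub_le {μ ν : SL → ℝ} (hμ0 : ∀ x, 0 ≤ μ x) (hμ1 : ∑ x, μ x = 1)
    (hν0 : ∀ y, 0 ≤ ν y) (hν1 : ∑ y, ν y = 1)
    (f : SL → ℝ) (L : ℝ) (hL : 0 ≤ L) (hf : ∀ x y, |f x - f y| ≤ L * dist x y) :
    |(∑ x, μ x * f x) - ∑ y, ν y * f y| ≤ L * Wass μ ν := by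
  have key : ∀ c ∈ WSet μ ν, |(∑ x, μ x * f x) - ∑ y, ν y * f y| ≤ L * c := by
    rintro c ⟨lam, h0, h1, h2, rfl⟩
    have e1 : (∑ x, μ x * f x) = ∑ p : SL × SL, lam p * f p.1 := by
      rw [Fintype.sum_prod_type]
      refine Finset.sum_congr rfl fun x _ => ?_
      rw [← h1 x, Finset.sum_mul]
    have e2 : (∑ y, ν y * f y) = ∑ p : SL × SL, lam p * f p.2 := by
      rw [Fintype.sum_prod_type, Finset.sum_comm]
      refine Finset.sum_congr rfl fun y _ => ?_
      rw [← h2 y, Finset.sum_mul]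
    rw [e1, e2, ← Finset.sum_sub_distrib, Finset.mul_sum]
    refine (Finset.abs_sum_le_sum_abs _ _).trans (Finset.sum_le_sum fun p _ => ?_)
    rw [← mul_sub, abs_mul, abs_of_nonneg (h0 p), mul_left_comm]
    exact mul_le_mul_of_nonneg_left (hf p.1 p.2) (h0 p)
  have hne := WSet_nonempty hμ0 hμ1 hν0 hν1
  rcases eq_or_lt_of_le hL with rfl | hL'
  · obtain ⟨c, hc⟩ := hne
    simpa using key c hc
  · rw [wass_eq, mul_comm, ← div_le_iff₀ hL']
    refine le_csInf hne fun c hc => ?_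
    rw [div_le_iff₀ hL', mul_comm]
    exact key c hc

lemma Vbar_lipschitz
    (Pbar : SL → A → SL → ℝ)
    (hPbar : ∀ x a, (∀ x', 0 ≤ Pbar x a x') ∧ (∑ x', Pbar x a x') = 1)
    (Rbar : SL → A → ℝ)
    (πbar : SL → A → ℝ) (hπbar : ∀ x, (∀ a, 0 ≤ πbar x a) ∧ (∑ a, πbar x a) = 1)
    (γ : ℝ) (hγ0 : 0 ≤ γ)
    (KR KP : ℝ) (hKR0 : 0 ≤ KR) (hγKP : γ * KP < 1)
    (hLipR : ∀ x₁ x₂ : SL,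
      |(∑ a, πbar x₁ a * Rbar x₁ a) - (∑ a, πbar x₂ a * Rbar x₂ a)| ≤ KR * dist x₁ x₂)
    (hLipP : ∀ x₁ x₂ : SL,
      Wass (fun x' => ∑ a, πbar x₁ a * Pbar x₁ a x')
        (fun x' => ∑ a, πbar x₂ a * Pbar x₂ a x') ≤ KP * dist x₁ x₂)
    (KV : ℝ) (hKV : KV = KR / (1 - γ * KP))
    (Vbar : SL → ℝ)
    (hVbar : ∀ x, Vbar x = ∑ a, πbar x a * (Rbar x a + γ * ∑ x', Pbar x a x' * Vbar x')) :
    ∀ x₁ x₂, |Vbar x₁ - Vbar x₂| ≤ KV * dist x₁ x₂ := by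
  classical
  have hKp1 : 0 < 1 - γ * KP := by linarith
  have hKV0 : 0 ≤ KV := hKV ▸ div_nonneg hKR0 hKp1.le
  -- rewritten Bellman
  have bell : ∀ x, Vbar x = (∑ a, πbar x a * Rbar x a)
      + γ * ∑ x', (∑ a, πbar x a * Pbar x a x') * Vbar x' := by
    intro x
    rw [hVbar x]
    simp only [mul_add, Finset.sum_add_distrib, Finset.mul_sum, Finset.sum_mul]
    congr 1
    rw [Finset.sum_comm]
    exact Finset.sum_congr rfl fun a _ => Finset.sum_congr rfl fun x' _ => by ring
  -- the μ's are distributions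
  have hμ0 : ∀ x : SL, ∀ x', 0 ≤ ∑ a, πbar x a * Pbar x a x' := fun x x' =>
    Finset.sum_nonneg fun a _ => mul_nonneg ((hπbar x).1 a) ((hPbar x a).1 x')
  have hμ1 : ∀ x : SL, (∑ x', ∑ a, πbar x a * Pbar x a x') = 1 := by
    intro x
    rw [Finset.sum_comm]
    calc (∑ a, ∑ x', πbar x a * Pbar x a x') = ∑ a, πbar x a := by
          refine Finset.sum_congr rfl fun a _ => ?_
          rw [← Finset.mul_sum, (hPbar x a).2, mul_one]
      _ = 1 := (hπbar x).2
  by_cases hsub : ∀ x₁ x₂ : SL, x₁ = x₂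
  · intro x₁ x₂
    rw [hsub x₁ x₂]
    simp [mul_nonneg hKV0 dist_nonneg]
  · push_neg at hsub
    obtain ⟨y₁, y₂, hy⟩ := hsub
    have hF : ((Finset.univ : Finset (SL × SL)).filter (fun p => p.1 ≠ p.2)).Nonempty :=
      ⟨(y₁, y₂), Finset.mem_filter.2 ⟨Finset.mem_univ (y₁, y₂), hy⟩⟩
    set g : SL × SL → ℝ := fun p => |Vbar p.1 - Vbar p.2| / dist p.1 p.2 with hg
    set L : ℝ := ((Finset.univ : Finset (SL × SL)).filter (fun p => p.1 ≠ p.2)).sup' hF g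
      with hLdef
    have hL0 : 0 ≤ L := by
      refine le_trans ?_ (Finset.le_sup' g (Finset.mem_filter.2 ⟨Finset.mem_univ (y₁, y₂), hy⟩))
      exact div_nonneg (abs_nonneg _) dist_nonneg
    have hLip : ∀ x₁ x₂, |Vbar x₁ - Vbar x₂| ≤ L * dist x₁ x₂ := by
      intro x₁ x₂
      by_cases hx : x₁ = x₂
      · simp [hx, mul_nonneg hL0 dist_nonneg]
      · have hd : 0 < dist x₁ x₂ := dist_pos.2 hx
        have hle : g (x₁, x₂) ≤ L :=
          Finset.le_sup' g (Finset.mem_filter.2 ⟨Finset.mem_univ (x₁, x₂), hx⟩)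
        calc |Vbar x₁ - Vbar x₂| = g (x₁, x₂) * dist x₁ x₂ :=
              (div_mul_cancel₀ _ hd.ne').symm
          _ ≤ L * dist x₁ x₂ := mul_le_mul_of_nonneg_right hle hd.le
    -- maximizer
    obtain ⟨p, hp, hpe⟩ := Finset.exists_mem_eq_sup' hF g
    have hpne : p.1 ≠ p.2 := (Finset.mem_filter.1 hp).2
    have hd : 0 < dist p.1 p.2 := dist_pos.2 hpne
    have key : |Vbar p.1 - Vbar p.2| ≤ KR * dist p.1 p.2 + γ * (L * (KP * dist p.1 p.2)) := by
      rw [bell p.1, bell p.2]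
      have triangle : |(∑ a, πbar p.1 a * Rbar p.1 a)
            + γ * ∑ x', (∑ a, πbar p.1 a * Pbar p.1 a x') * Vbar x'
          - ((∑ a, πbar p.2 a * Rbar p.2 a)
            + γ * ∑ x', (∑ a, πbar p.2 a * Pbar p.2 a x') * Vbar x')|
          ≤ |(∑ a, πbar p.1 a * Rbar p.1 a) - (∑ a, πbar p.2 a * Rbar p.2 a)|
            + γ * |(∑ x', (∑ a, πbar p.1 a * Pbar p.1 a x') * Vbar x')
              - ∑ x', (∑ a, πbar p.2 a * Pbar p.2 a x') * Vbar x'| := by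
        rw [show ∀ r₁ r₂ t₁ t₂ : ℝ, r₁ + γ*t₁ - (r₂ + γ*t₂) = (r₁ - r₂) + γ*(t₁ - t₂) by
          intros; ring]
        refine (abs_add_le _ _).trans (by rw [abs_mul, abs_of_nonneg hγ0])
      refine triangle.trans (add_le_add (hLipR p.1 p.2) (mul_le_mul_of_nonneg_left ?_ hγ0))
      have h1 := abs_expect_sub_le (hμ0 p.1) (hμ1 p.1) (hμ0 p.2) (hμ1 p.2) Vbar L hL0 hLip
      refine h1.trans ?_
      exact mul_le_mul_of_nonneg_left (hLipP p.1 p.2) hL0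
    have hLd : L * dist p.1 p.2 ≤ KR * dist p.1 p.2 + γ * (L * (KP * dist p.1 p.2)) := by
      refine le_trans ?_ key
      rw [hLdef, hpe]
      exact le_of_eq (div_mul_cancel₀ _ hd.ne')
    have hLKV : L ≤ KV := by
      have h2 : L ≤ KR + γ * KP * L := by
        have := le_of_mul_le_mul_right (by nlinarith [hLd] : L * dist p.1 p.2 ≤ (KR + γ * KP * L) * dist p.1 p.2) hd
        linarith
      rw [hKV, le_div_iff₀ hKp1]
      nlinarith
    intro x₁ x₂
    exact (hLip x₁ x₂).trans (mul_le_mul_of_nonneg_right hLKV dist_nonneg)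

end Aux

/-- the expected (under a stationary distribution of the baseline
policy) absolute difference between the value of `π̄∘φ` in the environment and
the latent value of `π̄` in the world model is bounded by the reward and
transition losses scaled by `1/(1/D − γ)`. -/
theorem average_value_difference_bound
    [Nonempty S] [Nonempty A] [Nonempty SL] [MetricSpace SL] [DecidableEq SL]
    (P : S → A → S → ℝ)
    (hP : ∀ s a, (∀ s', 0 ≤ P s a s') ∧ (∑ s', P s a s') = 1)
    (R : S → A → ℝ) (γ : ℝ) (hγ : 0 ≤ γ ∧ γ < 1)
    (Pbar : SL → A → SL → ℝ)
    (hPbar : ∀ x a, (∀ x', 0 ≤ Pbar x a x') ∧ (∑ x', Pbar x a x') = 1)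
    (Rbar : SL → A → ℝ)
    (φ : S → SL)
    (πbar : SL → A → ℝ) (hπbar : IsPolicy πbar)
    (πb : S → A → ℝ) (hπb : IsPolicy πb)
    (hsupp : ∀ s a, (0 < πb s a ↔ 0 < πbar (φ s) a))
    (hne : ((Finset.univ : Finset (S × A)).filter (fun p => 0 < πb p.1 p.2)).Nonempty)
    (D : ℝ)
    (hD : D = ((Finset.univ : Finset (S × A)).filter (fun p => 0 < πb p.1 p.2)).sup' hne
      (fun p => πbar (φ p.1) p.2 / πb p.1 p.2))
    (hγD : γ * D < 1)
    (ξ : S → ℝ) (hξ : (∀ s, 0 ≤ ξ s) ∧ (∑ s, ξ s) = 1)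
    (hstat : ∀ s', (∑ s, ∑ a, ξ s * πb s a * P s a s') = ξ s')
    (KR KP : ℝ) (hKR0 : 0 ≤ KR) (hKP0 : 0 ≤ KP) (hγKP : γ * KP < 1)
    (hLipR : ∀ x₁ x₂ : SL,
      |(∑ a, πbar x₁ a * Rbar x₁ a) - (∑ a, πbar x₂ a * Rbar x₂ a)| ≤ KR * dist x₁ x₂)
    (hLipP : ∀ x₁ x₂ : SL,
      Wass (fun x' => ∑ a, πbar x₁ a * Pbar x₁ a x')
        (fun x' => ∑ a, πbar x₂ a * Pbar x₂ a x') ≤ KP * dist x₁ x₂)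
    (KV : ℝ) (hKV : KV = KR / (1 - γ * KP))
    (V : S → ℝ)
    (hV : ∀ s, V s = ∑ a, πbar (φ s) a * (R s a + γ * ∑ s', P s a s' * V s'))
    (Vbar : SL → ℝ)
    (hVbar : ∀ x, Vbar x = ∑ a, πbar x a * (Rbar x a + γ * ∑ x', Pbar x a x' * Vbar x'))
    (LR LP : ℝ)
    (hLR : LR = ∑ s, ∑ a, ξ s * πb s a * |R s a - Rbar (φ s) a|)
    (hLP : LP = ∑ s, ∑ a, ξ s * πb s a *
      Wass (fun x => ∑ s', if φ s' = x then P s a s' else 0) (Pbar (φ s) a)) :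
    (∑ s, ξ s * |V s - Vbar (φ s)|) ≤ (LR + γ * KV * LP) / (1 / D - γ) := by
  classical
  obtain ⟨hγ0, hγ1⟩ := hγ
  have hKp1 : 0 < 1 - γ * KP := by linarith
  have hKV0 : 0 ≤ KV := hKV ▸ div_nonneg hKR0 hKp1.le
  have hVLip : ∀ x₁ x₂, |Vbar x₁ - Vbar x₂| ≤ KV * dist x₁ x₂ :=
    Vbar_lipschitz Pbar hPbar Rbar πbar hπbar γ hγ0 KR KP hKR0 hγKP hLipR hLipP KV hKV
      Vbar hVbar
  -- D is positive
  obtain ⟨p0, hp0⟩ := hne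
  have hp0' : 0 < πb p0.1 p0.2 := (Finset.mem_filter.1 hp0).2
  have hD0 : 0 < D := by
    have h1 : 0 < πbar (φ p0.1) p0.2 := (hsupp p0.1 p0.2).1 hp0'
    have h2 := Finset.le_sup' (fun p : S × A => πbar (φ p.1) p.2 / πb p.1 p.2) hp0
    rw [← hD] at h2
    exact lt_of_lt_of_le (div_pos h1 hp0') h2
  -- domination
  have hdom : ∀ s a, πbar (φ s) a ≤ D * πb s a := by
    intro s a
    by_cases h : 0 < πb s a
    · have hmem : (s, a) ∈ (Finset.univ : Finset (S × A)).filter (fun p => 0 < πb p.1 p.2) :=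
        Finset.mem_filter.2 ⟨Finset.mem_univ (s, a), h⟩
      have h2 := Finset.le_sup' (fun p : S × A => πbar (φ p.1) p.2 / πb p.1 p.2) hmem
      rw [← hD] at h2
      calc πbar (φ s) a = πbar (φ s) a / πb s a * πb s a := (div_mul_cancel₀ _ h.ne').symm
        _ ≤ D * πb s a := mul_le_mul_of_nonneg_right h2 h.le
    · have hb0 : πb s a = 0 := le_antisymm (not_lt.1 h) ((hπb s).1 a)
      have hbar0 : πbar (φ s) a = 0 := by
        by_contra hc
        exact h ((hsupp s a).2 (lt_of_le_of_ne ((hπbar (φ s)).1 a) (Ne.symm hc)))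
      rw [hbar0, hb0, mul_zero]
  -- pushforward facts
  have push0 : ∀ s a x, 0 ≤ ∑ s', if φ s' = x then P s a s' else 0 := by
    intro s a x
    refine Finset.sum_nonneg fun s' _ => ?_
    split
    · exact (hP s a).1 s'
    · exact le_refl 0
  have push1 : ∀ s a, (∑ x, ∑ s', if φ s' = x then P s a s' else 0) = 1 := by
    intro s a
    rw [Finset.sum_comm]
    calc (∑ s', ∑ x, if φ s' = x then P s a s' else 0) = ∑ s', P s a s' := by
          refine Finset.sum_congr rfl fun s' _ => ?_
          simp
      _ = 1 := (hP s a).2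
  have pushE : ∀ s a, (∑ x, (∑ s', if φ s' = x then P s a s' else 0) * Vbar x)
      = ∑ s', P s a s' * Vbar (φ s') := by
    intro s a
    simp only [Finset.sum_mul, ite_mul, zero_mul]
    rw [Finset.sum_comm]
    refine Finset.sum_congr rfl fun s' _ => ?_
    simp
  have hW0 : ∀ s a, 0 ≤ Wass (fun x => ∑ s', if φ s' = x then P s a s' else 0)
      (Pbar (φ s) a) := fun s a => wass_nonneg _ _
  have hΔ0 : ∀ s, 0 ≤ |V s - Vbar (φ s)| := fun s => abs_nonneg _
  -- pointwise bound
  have point : ∀ s, |V s - Vbar (φ s)| ≤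
      (∑ a, πbar (φ s) a * (|R s a - Rbar (φ s) a|
        + γ * (KV * Wass (fun x => ∑ s', if φ s' = x then P s a s' else 0) (Pbar (φ s) a))))
      + γ * ∑ a, πbar (φ s) a * ∑ s', P s a s' * |V s' - Vbar (φ s')| := by
    intro s
    have iden : V s - Vbar (φ s) = ∑ a, πbar (φ s) a *
        ((R s a - Rbar (φ s) a)
          + γ * (∑ s', P s a s' * (V s' - Vbar (φ s')))
          + γ * ((∑ s', P s a s' * Vbar (φ s')) - ∑ x', Pbar (φ s) a x' * Vbar x')) := by
      rw [hV s, hVbar (φ s), ← Finset.sum_sub_distrib]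
      refine Finset.sum_congr rfl fun a _ => ?_
      have hsub : ∑ s', P s a s' * (V s' - Vbar (φ s'))
          = (∑ s', P s a s' * V s') - ∑ s', P s a s' * Vbar (φ s') := by
        rw [← Finset.sum_sub_distrib]
        exact Finset.sum_congr rfl fun s' _ => mul_sub _ _ _
      rw [hsub]; ring
    have habs : |V s - Vbar (φ s)| ≤ ∑ a, πbar (φ s) a *
        (|R s a - Rbar (φ s) a|
          + γ * (∑ s', P s a s' * |V s' - Vbar (φ s')|)
          + γ * (KV * Wass (fun x => ∑ s', if φ s' = x then P s a s' else 0)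
              (Pbar (φ s) a))) := by
      rw [iden]
      refine (Finset.abs_sum_le_sum_abs _ _).trans (Finset.sum_le_sum fun a _ => ?_)
      rw [abs_mul, abs_of_nonneg ((hπbar (φ s)).1 a)]
      refine mul_le_mul_of_nonneg_left ?_ ((hπbar (φ s)).1 a)
      refine (abs_add_le _ _).trans (add_le_add ((abs_add_le _ _).trans (add_le_add le_rfl ?_)) ?_)
      · rw [abs_mul, abs_of_nonneg hγ0]
        refine mul_le_mul_of_nonneg_left ?_ hγ0
        refine (Finset.abs_sum_le_sum_abs _ _).trans (Finset.sum_le_sum fun s' _ => ?_)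
        rw [abs_mul, abs_of_nonneg ((hP s a).1 s')]
      · rw [abs_mul, abs_of_nonneg hγ0]
        refine mul_le_mul_of_nonneg_left ?_ hγ0
        rw [← pushE s a]
        exact abs_expect_sub_le (push0 s a) (push1 s a) ((hPbar (φ s) a).1)
          ((hPbar (φ s) a).2) Vbar KV hKV0 hVLip
    refine habs.trans (le_of_eq ?_)
    rw [Finset.mul_sum, ← Finset.sum_add_distrib]
    exact Finset.sum_congr rfl fun a _ => by ring
  -- global bound
  have hBnd0 : ∀ s a, 0 ≤ |R s a - Rbar (φ s) a|
      + γ * (KV * Wass (fun x => ∑ s', if φ s' = x then P s a s' else 0) (Pbar (φ s) a)) :=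
    fun s a => add_nonneg (abs_nonneg _) (mul_nonneg hγ0 (mul_nonneg hKV0 (hW0 s a)))
  have hT0 : ∀ s a, 0 ≤ ∑ s', P s a s' * |V s' - Vbar (φ s')| := fun s a =>
    Finset.sum_nonneg fun s' _ => mul_nonneg ((hP s a).1 s') (hΔ0 s')
  have key : (∑ s, ξ s * |V s - Vbar (φ s)|) ≤
      D * (∑ s, ∑ a, ξ s * πb s a * (|R s a - Rbar (φ s) a|
        + γ * (KV * Wass (fun x => ∑ s', if φ s' = x then P s a s' else 0) (Pbar (φ s) a))))
      + γ * (D * ∑ s, ∑ a, ξ s * πb s a * ∑ s', P s a s' * |V s' - Vbar (φ s')|) := by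
    have step : ∀ s, ξ s * |V s - Vbar (φ s)| ≤
        (D * ∑ a, ξ s * πb s a * (|R s a - Rbar (φ s) a|
            + γ * (KV * Wass (fun x => ∑ s', if φ s' = x then P s a s' else 0)
                (Pbar (φ s) a))))
          + γ * (D * ∑ a, ξ s * πb s a * ∑ s', P s a s' * |V s' - Vbar (φ s')|) := by
      intro s
      calc ξ s * |V s - Vbar (φ s)|
        ≤ ξ s * ((∑ a, πbar (φ s) a * (|R s a - Rbar (φ s) a|
            + γ * (KV * Wass (fun x => ∑ s', if φ s' = x then P s a s' else 0)
                (Pbar (φ s) a))))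
          + γ * ∑ a, πbar (φ s) a * ∑ s', P s a s' * |V s' - Vbar (φ s')|) :=
          mul_le_mul_of_nonneg_left (point s) (hξ.1 s)
      _ = (∑ a, ξ s * (πbar (φ s) a * (|R s a - Rbar (φ s) a|
            + γ * (KV * Wass (fun x => ∑ s', if φ s' = x then P s a s' else 0)
                (Pbar (φ s) a)))))
          + γ * ∑ a, ξ s * (πbar (φ s) a * ∑ s', P s a s' * |V s' - Vbar (φ s')|) := by
          rw [mul_add, Finset.mul_sum, mul_left_comm, Finset.mul_sum]
      _ ≤ (∑ a, D * (ξ s * πb s a * (|R s a - Rbar (φ s) a|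
            + γ * (KV * Wass (fun x => ∑ s', if φ s' = x then P s a s' else 0)
                (Pbar (φ s) a)))))
          + γ * ∑ a, D * (ξ s * πb s a * ∑ s', P s a s' * |V s' - Vbar (φ s')|) := by
          refine add_le_add (Finset.sum_le_sum fun a _ => ?_)
            (mul_le_mul_of_nonneg_left (Finset.sum_le_sum fun a _ => ?_) hγ0)
          · calc ξ s * (πbar (φ s) a * _) = πbar (φ s) a * (ξ s * _) := by ring
              _ ≤ (D * πb s a) * (ξ s * _) := mul_le_mul_of_nonneg_right (hdom s a)
                  (mul_nonneg (hξ.1 s) (hBnd0 s a))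
              _ = D * (ξ s * πb s a * _) := by ring
          · calc ξ s * (πbar (φ s) a * _) = πbar (φ s) a * (ξ s * _) := by ring
              _ ≤ (D * πb s a) * (ξ s * _) := mul_le_mul_of_nonneg_right (hdom s a)
                  (mul_nonneg (hξ.1 s) (hT0 s a))
              _ = D * (ξ s * πb s a * _) := by ring
      _ = (D * ∑ a, ξ s * πb s a * (|R s a - Rbar (φ s) a|
            + γ * (KV * Wass (fun x => ∑ s', if φ s' = x then P s a s' else 0)
                (Pbar (φ s) a))))
          + γ * (D * ∑ a, ξ s * πb s a * ∑ s', P s a s' * |V s' - Vbar (φ s')|) := by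
          rw [← Finset.mul_sum, ← Finset.mul_sum]
    calc (∑ s, ξ s * |V s - Vbar (φ s)|) ≤ _ := Finset.sum_le_sum fun s _ => step s
      _ = D * (∑ s, ∑ a, ξ s * πb s a * (|R s a - Rbar (φ s) a|
            + γ * (KV * Wass (fun x => ∑ s', if φ s' = x then P s a s' else 0)
                (Pbar (φ s) a))))
          + γ * (D * ∑ s, ∑ a, ξ s * πb s a * ∑ s', P s a s' * |V s' - Vbar (φ s')|) := by
          rw [Finset.sum_add_distrib, ← Finset.mul_sum, ← Finset.mul_sum, ← Finset.mul_sum]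
  -- identify the two double sums
  have eC : (∑ s, ∑ a, ξ s * πb s a * (|R s a - Rbar (φ s) a|
      + γ * (KV * Wass (fun x => ∑ s', if φ s' = x then P s a s' else 0) (Pbar (φ s) a))))
      = LR + γ * KV * LP := by
    rw [hLR, hLP, Finset.mul_sum, ← Finset.sum_add_distrib]
    refine Finset.sum_congr rfl fun s _ => ?_
    rw [Finset.mul_sum, ← Finset.sum_add_distrib]
    exact Finset.sum_congr rfl fun a _ => by ring
  have eX : (∑ s, ∑ a, ξ s * πb s a * ∑ s', P s a s' * |V s' - Vbar (φ s')|)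
      = ∑ s, ξ s * |V s - Vbar (φ s)| := by
    calc (∑ s, ∑ a, ξ s * πb s a * ∑ s', P s a s' * |V s' - Vbar (φ s')|)
        = ∑ s, ∑ a, ∑ s', ξ s * πb s a * P s a s' * |V s' - Vbar (φ s')| := by
          refine Finset.sum_congr rfl fun s _ => Finset.sum_congr rfl fun a _ => ?_
          rw [Finset.mul_sum]
          exact Finset.sum_congr rfl fun s' _ => by ring
      _ = ∑ s, ∑ s', ∑ a, ξ s * πb s a * P s a s' * |V s' - Vbar (φ s')| :=
          Finset.sum_congr rfl fun s _ => Finset.sum_comm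
      _ = ∑ s', ∑ s, ∑ a, ξ s * πb s a * P s a s' * |V s' - Vbar (φ s')| :=
          Finset.sum_comm
      _ = ∑ s', (∑ s, ∑ a, ξ s * πb s a * P s a s') * |V s' - Vbar (φ s')| := by
          refine Finset.sum_congr rfl fun s' _ => ?_
          rw [Finset.sum_mul]
          refine Finset.sum_congr rfl fun s _ => ?_
          rw [Finset.sum_mul]
      _ = ∑ s', ξ s' * |V s' - Vbar (φ s')| :=
          Finset.sum_congr rfl fun s' _ => by rw [hstat s']
  rw [eC, eX] at key
  -- final algebra
  have hγD' : 0 < 1 - γ * D := by linarith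
  have hfin : (LR + γ * KV * LP) / (1 / D - γ) = D * (LR + γ * KV * LP) / (1 - γ * D) := by
    rw [show 1 / D - γ = (1 - γ * D) / D by field_simp [hD0.ne'], div_div_eq_mul_div, mul_comm]
  rw [hfin, le_div_iff₀ hγD']
  nlinarith [key]
end

section
/- Let M = ⟨S, A, P, R, γ⟩ be a finite MDP with γ ∈ [0,1), M̄ = ⟨S̄, A, P̄, R̄, γ⟩ a latent MDP over a finite metric space (S̄, d̄), φ : S → S̄ an encoder, π̄ a latent policy, and π_b a baseline policy with supp π_b(·|s) = supp π̄(·|φ(s)) for all s ∈ S. Let D = max{π̄(a|φ(s))/π_b(a|s) : s ∈ S, a ∈ supp π_b(·|s)} with γ·D < 1, and let ξ be a stationary distribution of π_b. Assume the latent model has Lipschitz constants K_R̄, K_P̄ under π̄ with γ·K_P̄ < 1, and set K_V = K_R̄/(1 − γ·K_P̄). Then for every ε > 0, ξ({s ∈ S : |V^{π̄∘φ}(s) − V̄^{π̄}(φ(s))| > ε/2}) ≤ 2·(L_R + γ·K_V·L_P)/(ε·(1/D − γ)), where L_R, L_P are the reward and transition losses with respect to ξ and π_b. -/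
open Finset

variable {S A SL : Type*} [Fintype S] [Fintype A] [Fintype SL]

section Helpers

variable {T : Type*} [Fintype T] [MetricSpace T]

lemma wassSet_nonempty (μ ν : T → ℝ)
    (hμ0 : ∀ x, 0 ≤ μ x) (hμ1 : (∑ x, μ x) = 1)
    (hν0 : ∀ x, 0 ≤ ν x) (hν1 : (∑ x, ν x) = 1) :
    { c : ℝ | ∃ lam : T × T → ℝ, (∀ p, 0 ≤ lam p) ∧
      (∀ x, (∑ y, lam (x, y)) = μ x) ∧ (∀ y, (∑ x, lam (x, y)) = ν y) ∧
      c = ∑ p : T × T, lam p * dist p.1 p.2 }.Nonempty := by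
  refine ⟨_, fun p => μ p.1 * ν p.2, fun p => mul_nonneg (hμ0 _) (hν0 _),
    fun x => ?_, fun y => ?_, rfl⟩
  · simp only []; rw [← Finset.mul_sum, hν1, mul_one]
  · simp only []; rw [← Finset.sum_mul, hμ1, one_mul]

lemma wassSet_bddBelow (μ ν : T → ℝ) :
    BddBelow { c : ℝ | ∃ lam : T × T → ℝ, (∀ p, 0 ≤ lam p) ∧
      (∀ x, (∑ y, lam (x, y)) = μ x) ∧ (∀ y, (∑ x, lam (x, y)) = ν y) ∧
      c = ∑ p : T × T, lam p * dist p.1 p.2 } := by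
  refine ⟨0, fun c hc => ?_⟩
  obtain ⟨lam, h0, -, -, rfl⟩ := hc
  exact Finset.sum_nonneg fun p _ => mul_nonneg (h0 p) dist_nonneg

lemma wass_nonneg_s13 (μ ν : T → ℝ)
    (hμ0 : ∀ x, 0 ≤ μ x) (hμ1 : (∑ x, μ x) = 1)
    (hν0 : ∀ x, 0 ≤ ν x) (hν1 : (∑ x, ν x) = 1) :
    0 ≤ Wass μ ν := by
  refine le_csInf (wassSet_nonempty μ ν hμ0 hμ1 hν0 hν1) fun c hc => ?_
  obtain ⟨lam, h0, -, -, rfl⟩ := hc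
  exact Finset.sum_nonneg fun p _ => mul_nonneg (h0 p) dist_nonneg

lemma abs_expect_sub_le_wass (μ ν : T → ℝ)
    (hμ0 : ∀ x, 0 ≤ μ x) (hμ1 : (∑ x, μ x) = 1)
    (hν0 : ∀ x, 0 ≤ ν x) (hν1 : (∑ x, ν x) = 1)
    (f : T → ℝ) (K : ℝ) (hK : 0 ≤ K)
    (hf : ∀ x y, |f x - f y| ≤ K * dist x y) :
    |(∑ x, μ x * f x) - ∑ x, ν x * f x| ≤ K * Wass μ ν := by
  have hWdef : Wass μ ν = sInf { c : ℝ | ∃ lam : T × T → ℝ, (∀ p, 0 ≤ lam p) ∧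
      (∀ x, (∑ y, lam (x, y)) = μ x) ∧ (∀ y, (∑ x, lam (x, y)) = ν y) ∧
      c = ∑ p : T × T, lam p * dist p.1 p.2 } := rfl
  refine le_of_forall_pos_le_add fun ε hε => ?_
  have hne := wassSet_nonempty μ ν hμ0 hμ1 hν0 hν1
  have hlt : sInf { c : ℝ | ∃ lam : T × T → ℝ, (∀ p, 0 ≤ lam p) ∧
      (∀ x, (∑ y, lam (x, y)) = μ x) ∧ (∀ y, (∑ x, lam (x, y)) = ν y) ∧
      c = ∑ p : T × T, lam p * dist p.1 p.2 } < Wass μ ν + ε / (K + 1) := by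
    rw [← hWdef]; exact lt_add_of_pos_right _ (by positivity)
  obtain ⟨c, hc, hclt⟩ := exists_lt_of_csInf_lt hne hlt
  obtain ⟨lam, h0, hx, hy, rfl⟩ := hc
  -- rewrite the difference as a sum over the coupling
  have h1 : (∑ x, μ x * f x) = ∑ x, ∑ y, lam (x, y) * f x := by
    refine Finset.sum_congr rfl fun x _ => ?_
    rw [← hx x, Finset.sum_mul]
  have h2 : (∑ y, ν y * f y) = ∑ x, ∑ y, lam (x, y) * f y := by
    rw [Finset.sum_comm]
    refine Finset.sum_congr rfl fun y _ => ?_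
    rw [← hy y, Finset.sum_mul]
  have hdiff : (∑ x, μ x * f x) - ∑ x, ν x * f x
      = ∑ p : T × T, lam p * (f p.1 - f p.2) := by
    rw [h1, h2, ← Finset.sum_sub_distrib, Fintype.sum_prod_type]
    refine Finset.sum_congr rfl fun x _ => ?_
    rw [← Finset.sum_sub_distrib]
    exact Finset.sum_congr rfl fun y _ => by ring
  have hb : |(∑ x, μ x * f x) - ∑ x, ν x * f x|
      ≤ K * ∑ p : T × T, lam p * dist p.1 p.2 := by
    rw [hdiff, Finset.mul_sum]
    refine (Finset.abs_sum_le_sum_abs _ _).trans (Finset.sum_le_sum fun p _ => ?_)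
    rw [abs_mul, abs_of_nonneg (h0 p)]
    calc lam p * |f p.1 - f p.2| ≤ lam p * (K * dist p.1 p.2) :=
          mul_le_mul_of_nonneg_left (hf p.1 p.2) (h0 p)
      _ = K * (lam p * dist p.1 p.2) := by ring
  refine hb.trans ?_
  have : K * (∑ p : T × T, lam p * dist p.1 p.2) ≤ K * (Wass μ ν + ε / (K + 1)) :=
    mul_le_mul_of_nonneg_left hclt.le hK
  refine this.trans ?_
  have hK1 : K / (K + 1) ≤ 1 := by
    rw [div_le_one (by linarith)]; linarith
  have : K * (ε / (K + 1)) ≤ ε := by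
    rw [mul_div_assoc'] -- K * ε / (K+1)
    rw [div_le_iff₀ (by linarith : (0:ℝ) < K + 1)]
    nlinarith
  linarith

end Helpers

/-- Markov-inequality step: the stationary mass of states whose
environment/latent value gap exceeds `ε/2` is at most
`2·(L_R + γ·K_V·L_P)/(ε·(1/D − γ))`. -/
theorem value_gap_markov_bound
    [Nonempty S] [Nonempty A] [Nonempty SL] [MetricSpace SL] [DecidableEq SL]
    (P : S → A → S → ℝ)
    (hP : ∀ s a, (∀ s', 0 ≤ P s a s') ∧ (∑ s', P s a s') = 1)
    (R : S → A → ℝ) (γ : ℝ) (hγ : 0 ≤ γ ∧ γ < 1)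
    (Pbar : SL → A → SL → ℝ)
    (hPbar : ∀ x a, (∀ x', 0 ≤ Pbar x a x') ∧ (∑ x', Pbar x a x') = 1)
    (Rbar : SL → A → ℝ)
    (φ : S → SL)
    (πbar : SL → A → ℝ) (hπbar : IsPolicy πbar)
    (πb : S → A → ℝ) (hπb : IsPolicy πb)
    (hsupp : ∀ s a, (0 < πb s a ↔ 0 < πbar (φ s) a))
    (hne : ((Finset.univ : Finset (S × A)).filter (fun p => 0 < πb p.1 p.2)).Nonempty)
    (D : ℝ)
    (hD : D = ((Finset.univ : Finset (S × A)).filter (fun p => 0 < πb p.1 p.2)).sup' hne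
      (fun p => πbar (φ p.1) p.2 / πb p.1 p.2))
    (hγD : γ * D < 1)
    (ξ : S → ℝ) (hξ : (∀ s, 0 ≤ ξ s) ∧ (∑ s, ξ s) = 1)
    (hstat : ∀ s', (∑ s, ∑ a, ξ s * πb s a * P s a s') = ξ s')
    (KR KP : ℝ) (hKR0 : 0 ≤ KR) (hKP0 : 0 ≤ KP) (hγKP : γ * KP < 1)
    (hLipR : ∀ x₁ x₂ : SL,
      |(∑ a, πbar x₁ a * Rbar x₁ a) - (∑ a, πbar x₂ a * Rbar x₂ a)| ≤ KR * dist x₁ x₂)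
    (hLipP : ∀ x₁ x₂ : SL,
      Wass (fun x' => ∑ a, πbar x₁ a * Pbar x₁ a x')
        (fun x' => ∑ a, πbar x₂ a * Pbar x₂ a x') ≤ KP * dist x₁ x₂)
    (KV : ℝ) (hKV : KV = KR / (1 - γ * KP))
    (V : S → ℝ)
    (hV : ∀ s, V s = ∑ a, πbar (φ s) a * (R s a + γ * ∑ s', P s a s' * V s'))
    (Vbar : SL → ℝ)
    (hVbar : ∀ x, Vbar x = ∑ a, πbar x a * (Rbar x a + γ * ∑ x', Pbar x a x' * Vbar x'))
    (LR LP : ℝ)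
    (hLR : LR = ∑ s, ∑ a, ξ s * πb s a * |R s a - Rbar (φ s) a|)
    (hLP : LP = ∑ s, ∑ a, ξ s * πb s a *
      Wass (fun x => ∑ s', if φ s' = x then P s a s' else 0) (Pbar (φ s) a)) :
    ∀ ε : ℝ, 0 < ε →
      (∑ s ∈ (Finset.univ : Finset S).filter
        (fun s => ε / 2 < |V s - Vbar (φ s)|), ξ s) ≤
      2 * (LR + γ * KV * LP) / (ε * (1 / D - γ)) := by
  intro ε hε
  obtain ⟨hγ0, hγ1⟩ := hγ
  have h1γKP : 0 < 1 - γ * KP := by linarith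
  have hKV0 : 0 ≤ KV := by rw [hKV]; positivity
  -- D is positive
  have hD0 : 0 < D := by
    obtain ⟨p, hp⟩ := hne
    have hpb : 0 < πb p.1 p.2 := (Finset.mem_filter.mp hp).2
    have hpbar : 0 < πbar (φ p.1) p.2 := (hsupp p.1 p.2).mp hpb
    have : πbar (φ p.1) p.2 / πb p.1 p.2 ≤ D :=
      hD ▸ Finset.le_sup' (fun p : S × A => πbar (φ p.1) p.2 / πb p.1 p.2) hp
    exact lt_of_lt_of_le (div_pos hpbar hpb) this
  have h1γD : 0 < 1 - γ * D := by linarith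
  -- importance sampling bound
  have hDbound : ∀ s a, πbar (φ s) a ≤ D * πb s a := by
    intro s a
    rcases lt_or_eq_of_le ((hπb s).1 a) with hpos | hzero
    · have hmem : (s, a) ∈ (Finset.univ : Finset (S × A)).filter
        (fun p => 0 < πb p.1 p.2) := Finset.mem_filter.mpr ⟨Finset.mem_univ _, hpos⟩
      have : πbar (φ s) a / πb s a ≤ D :=
        hD ▸ Finset.le_sup' (fun p : S × A => πbar (φ p.1) p.2 / πb p.1 p.2) hmem
      calc πbar (φ s) a = (πbar (φ s) a / πb s a) * πb s a := by
            field_simp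
        _ ≤ D * πb s a := mul_le_mul_of_nonneg_right this hpos.le
    · have : ¬ (0 < πbar (φ s) a) := fun h => by
        exact absurd ((hsupp s a).mpr h) (by rw [← hzero]; exact lt_irrefl 0)
      have hz : πbar (φ s) a = 0 := le_antisymm (not_lt.mp this) ((hπbar (φ s)).1 a)
      rw [hz, ← hzero, mul_zero]
  -- the latent state distribution under πbar is a probability distribution
  have hprobL : ∀ x1 : SL, (∀ x', 0 ≤ ∑ a, πbar x1 a * Pbar x1 a x') ∧
      (∑ x', ∑ a, πbar x1 a * Pbar x1 a x') = 1 := by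
    intro x1
    constructor
    · intro x'
      exact Finset.sum_nonneg fun a _ => mul_nonneg ((hπbar x1).1 a) ((hPbar x1 a).1 x')
    · rw [Finset.sum_comm]
      calc ∑ a, ∑ x', πbar x1 a * Pbar x1 a x'
          = ∑ a, πbar x1 a * ∑ x', Pbar x1 a x' := by
            exact Finset.sum_congr rfl fun a _ => (Finset.mul_sum _ _ _).symm
        _ = ∑ a, πbar x1 a := by
            exact Finset.sum_congr rfl fun a _ => by rw [(hPbar x1 a).2, mul_one]
        _ = 1 := (hπbar x1).2
  -- reorganized Bellman equation for Vbar
  have hVbar' : ∀ x1 : SL, Vbar x1 = (∑ a, πbar x1 a * Rbar x1 a) +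
      γ * ∑ x', (∑ a, πbar x1 a * Pbar x1 a x') * Vbar x' := by
    intro x1
    calc Vbar x1 = ∑ a, (πbar x1 a * Rbar x1 a +
          γ * ∑ x', πbar x1 a * (Pbar x1 a x' * Vbar x')) := by
          rw [hVbar x1]
          refine Finset.sum_congr rfl fun a _ => ?_
          rw [← Finset.mul_sum Finset.univ (fun x' => Pbar x1 a x' * Vbar x') (πbar x1 a)]
          ring
      _ = (∑ a, πbar x1 a * Rbar x1 a) +
          γ * ∑ a, ∑ x', πbar x1 a * (Pbar x1 a x' * Vbar x') := by
          rw [Finset.sum_add_distrib, Finset.mul_sum]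
      _ = (∑ a, πbar x1 a * Rbar x1 a) +
          γ * ∑ x', (∑ a, πbar x1 a * Pbar x1 a x') * Vbar x' := by
          congr 2
          calc ∑ a, ∑ x', πbar x1 a * (Pbar x1 a x' * Vbar x')
              = ∑ x', ∑ a, πbar x1 a * (Pbar x1 a x' * Vbar x') := Finset.sum_comm
            _ = ∑ x', (∑ a, πbar x1 a * Pbar x1 a x') * Vbar x' := by
              refine Finset.sum_congr rfl fun x' _ => ?_
              rw [Finset.sum_mul]
              exact Finset.sum_congr rfl fun a _ => by ring
  -- Vbar is KV-Lipschitz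
  have huneSL : (Finset.univ : Finset (SL × SL)).Nonempty := Finset.univ_nonempty
  set f : SL × SL → ℝ := fun p => |Vbar p.1 - Vbar p.2| / dist p.1 p.2 with hf
  set C : ℝ := (Finset.univ : Finset (SL × SL)).sup' huneSL f with hC
  have hC0 : 0 ≤ C := by
    have x0 : SL := Classical.arbitrary SL
    have h := Finset.le_sup' f (Finset.mem_univ (x0, x0))
    rw [← hC] at h
    have hz : f (x0, x0) = 0 := by simp [hf]
    linarith [hz ▸ h]
  have hCLip : ∀ x y : SL, |Vbar x - Vbar y| ≤ C * dist x y := by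
    intro x y
    rcases eq_or_ne x y with rfl | hxy
    · simp
    · have hd : 0 < dist x y := dist_pos.mpr hxy
      have h := Finset.le_sup' f (Finset.mem_univ (x, y))
      rw [hC]
      exact (div_le_iff₀ hd).mp h
  have hCK : C ≤ KV := by
    obtain ⟨p, -, hp⟩ := Finset.exists_mem_eq_sup' huneSL f
    rcases eq_or_ne p.1 p.2 with heq | hne'
    · have : C = 0 := by rw [hC, hp, hf]; simp [heq]
      rw [this, hKV]; positivity
    · have hd : 0 < dist p.1 p.2 := dist_pos.mpr hne'
      have hW : |(∑ x', (∑ a, πbar p.1 a * Pbar p.1 a x') * Vbar x') -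
          ∑ x', (∑ a, πbar p.2 a * Pbar p.2 a x') * Vbar x'|
          ≤ C * (KP * dist p.1 p.2) := by
        have := abs_expect_sub_le_wass (fun x' => ∑ a, πbar p.1 a * Pbar p.1 a x')
          (fun x' => ∑ a, πbar p.2 a * Pbar p.2 a x')
          (hprobL p.1).1 (hprobL p.1).2 (hprobL p.2).1 (hprobL p.2).2
          Vbar C hC0 hCLip
        exact this.trans (mul_le_mul_of_nonneg_left (hLipP p.1 p.2) hC0)
      have hRd := hLipR p.1 p.2
      have hkey : |Vbar p.1 - Vbar p.2| ≤ KR * dist p.1 p.2 + γ * (C * (KP * dist p.1 p.2)) := by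
        rw [hVbar' p.1, hVbar' p.2]
        have habs : ((∑ a, πbar p.1 a * Rbar p.1 a) +
            γ * ∑ x', (∑ a, πbar p.1 a * Pbar p.1 a x') * Vbar x') -
            ((∑ a, πbar p.2 a * Rbar p.2 a) +
            γ * ∑ x', (∑ a, πbar p.2 a * Pbar p.2 a x') * Vbar x')
            = ((∑ a, πbar p.1 a * Rbar p.1 a) - (∑ a, πbar p.2 a * Rbar p.2 a)) +
            γ * ((∑ x', (∑ a, πbar p.1 a * Pbar p.1 a x') * Vbar x') -
              (∑ x', (∑ a, πbar p.2 a * Pbar p.2 a x') * Vbar x')) := by ring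
        rw [habs]
        calc |_ + γ * _| ≤ |(∑ a, πbar p.1 a * Rbar p.1 a) - (∑ a, πbar p.2 a * Rbar p.2 a)|
              + |γ * ((∑ x', (∑ a, πbar p.1 a * Pbar p.1 a x') * Vbar x') -
              (∑ x', (∑ a, πbar p.2 a * Pbar p.2 a x') * Vbar x'))| := abs_add_le _ _
          _ ≤ KR * dist p.1 p.2 + γ * (C * (KP * dist p.1 p.2)) := by
              rw [abs_mul, abs_of_nonneg hγ0]
              exact add_le_add hRd (mul_le_mul_of_nonneg_left hW hγ0)
      have hCd : C = |Vbar p.1 - Vbar p.2| / dist p.1 p.2 := hC.trans hp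
      have hC' : C * dist p.1 p.2 ≤ (KR + γ * (C * KP)) * dist p.1 p.2 := by
        have : C * dist p.1 p.2 = |Vbar p.1 - Vbar p.2| := by
          rw [hCd]; field_simp
        rw [this]; nlinarith [hkey]
      have hCle : C ≤ KR + γ * (C * KP) := le_of_mul_le_mul_right (by linarith [hC']) hd
      rw [hKV, le_div_iff₀ h1γKP]
      nlinarith
  have hVLip : ∀ x y : SL, |Vbar x - Vbar y| ≤ KV * dist x y := fun x y =>
    (hCLip x y).trans (mul_le_mul_of_nonneg_right hCK dist_nonneg)
  -- pushforward distribution facts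
  have hφP0 : ∀ s a x, 0 ≤ ∑ s', if φ s' = x then P s a s' else 0 := by
    intro s a x
    refine Finset.sum_nonneg fun s' _ => ?_
    split
    · exact (hP s a).1 s'
    · exact le_refl 0
  have hφP1 : ∀ s a, (∑ x, ∑ s', if φ s' = x then P s a s' else 0) = 1 := by
    intro s a
    rw [Finset.sum_comm]
    calc ∑ s', ∑ x, (if φ s' = x then P s a s' else 0)
        = ∑ s', P s a s' := by
          refine Finset.sum_congr rfl fun s' _ => ?_
          rw [Finset.sum_ite_eq]
          simp
      _ = 1 := (hP s a).2
  have hpush : ∀ s a, (∑ s', P s a s' * Vbar (φ s')) =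
      ∑ x, (∑ s', if φ s' = x then P s a s' else 0) * Vbar x := by
    intro s a
    calc ∑ s', P s a s' * Vbar (φ s')
        = ∑ s', ∑ x, (if φ s' = x then P s a s' * Vbar x else 0) := by
          refine Finset.sum_congr rfl fun s' _ => ?_
          rw [Finset.sum_ite_eq]
          simp
      _ = ∑ x, ∑ s', (if φ s' = x then P s a s' * Vbar x else 0) := Finset.sum_comm
      _ = ∑ x, (∑ s', if φ s' = x then P s a s' else 0) * Vbar x := by
          refine Finset.sum_congr rfl fun x _ => ?_
          rw [Finset.sum_mul]
          refine Finset.sum_congr rfl fun s' _ => ?_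
          rw [ite_mul, zero_mul]
  set g : S → ℝ := fun s => |V s - Vbar (φ s)| with hg
  set c : S → A → ℝ := fun s a => |R s a - Rbar (φ s) a| +
    γ * KV * Wass (fun x => ∑ s', if φ s' = x then P s a s' else 0) (Pbar (φ s) a) with hc
  have hgnn : ∀ s, 0 ≤ g s := fun s => abs_nonneg _
  have hc0 : ∀ s a, 0 ≤ c s a := by
    intro s a
    have hw := wass_nonneg_s13 (fun x => ∑ s', if φ s' = x then P s a s' else 0)
      (Pbar (φ s) a) (hφP0 s a) (hφP1 s a) ((hPbar (φ s) a).1) ((hPbar (φ s) a).2)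
    exact add_nonneg (abs_nonneg _) (mul_nonneg (mul_nonneg hγ0 hKV0) hw)
  -- per-state key inequality
  have hkey : ∀ s, g s ≤ (∑ a, πbar (φ s) a * c s a) +
      γ * ∑ a, πbar (φ s) a * ∑ s', P s a s' * g s' := by
    intro s
    have hdecomp : V s - Vbar (φ s) = ∑ a, πbar (φ s) a *
        ((R s a - Rbar (φ s) a) +
         γ * ((∑ s', P s a s' * (V s' - Vbar (φ s'))) +
           ((∑ s', P s a s' * Vbar (φ s')) - ∑ x', Pbar (φ s) a x' * Vbar x'))) := by
      rw [hV s, hVbar (φ s), ← Finset.sum_sub_distrib]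
      refine Finset.sum_congr rfl fun a _ => ?_
      have e1 : (∑ s', P s a s' * (V s' - Vbar (φ s'))) =
          (∑ s', P s a s' * V s') - ∑ s', P s a s' * Vbar (φ s') := by
        rw [← Finset.sum_sub_distrib]
        exact Finset.sum_congr rfl fun s' _ => by ring
      rw [e1]; ring
    have hterm : ∀ a, |(R s a - Rbar (φ s) a) +
         γ * ((∑ s', P s a s' * (V s' - Vbar (φ s'))) +
           ((∑ s', P s a s' * Vbar (φ s')) - ∑ x', Pbar (φ s) a x' * Vbar x'))|
        ≤ c s a + γ * ∑ s', P s a s' * g s' := by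
      intro a
      have hT2 : |(∑ s', P s a s' * Vbar (φ s')) - ∑ x', Pbar (φ s) a x' * Vbar x'|
          ≤ KV * Wass (fun x => ∑ s', if φ s' = x then P s a s' else 0) (Pbar (φ s) a) := by
        rw [hpush s a]
        exact abs_expect_sub_le_wass _ _ (hφP0 s a) (hφP1 s a)
          ((hPbar (φ s) a).1) ((hPbar (φ s) a).2) Vbar KV hKV0 hVLip
      have hT1 : |∑ s', P s a s' * (V s' - Vbar (φ s'))| ≤ ∑ s', P s a s' * g s' := by
        refine (Finset.abs_sum_le_sum_abs _ _).trans (Finset.sum_le_sum fun s' _ => ?_)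
        rw [abs_mul, abs_of_nonneg ((hP s a).1 s')]
      calc |(R s a - Rbar (φ s) a) +
           γ * ((∑ s', P s a s' * (V s' - Vbar (φ s'))) +
             ((∑ s', P s a s' * Vbar (φ s')) - ∑ x', Pbar (φ s) a x' * Vbar x'))|
          ≤ |R s a - Rbar (φ s) a| +
            |γ * ((∑ s', P s a s' * (V s' - Vbar (φ s'))) +
             ((∑ s', P s a s' * Vbar (φ s')) - ∑ x', Pbar (φ s) a x' * Vbar x'))| :=
            abs_add_le _ _
        _ ≤ |R s a - Rbar (φ s) a| +
            γ * (|∑ s', P s a s' * (V s' - Vbar (φ s'))| +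
             |(∑ s', P s a s' * Vbar (φ s')) - ∑ x', Pbar (φ s) a x' * Vbar x'|) := by
            rw [abs_mul, abs_of_nonneg hγ0]
            exact add_le_add le_rfl (mul_le_mul_of_nonneg_left (abs_add_le _ _) hγ0)
        _ ≤ |R s a - Rbar (φ s) a| +
            γ * ((∑ s', P s a s' * g s') +
              KV * Wass (fun x => ∑ s', if φ s' = x then P s a s' else 0) (Pbar (φ s) a)) := by
            exact add_le_add le_rfl (mul_le_mul_of_nonneg_left (add_le_add hT1 hT2) hγ0)
        _ = c s a + γ * ∑ s', P s a s' * g s' := by rw [hc]; ring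
    calc g s = |∑ a, πbar (φ s) a *
        ((R s a - Rbar (φ s) a) +
         γ * ((∑ s', P s a s' * (V s' - Vbar (φ s'))) +
           ((∑ s', P s a s' * Vbar (φ s')) - ∑ x', Pbar (φ s) a x' * Vbar x')))| := by
          rw [hg]; simp only []; rw [hdecomp]
      _ ≤ ∑ a, πbar (φ s) a * |(R s a - Rbar (φ s) a) +
         γ * ((∑ s', P s a s' * (V s' - Vbar (φ s'))) +
           ((∑ s', P s a s' * Vbar (φ s')) - ∑ x', Pbar (φ s) a x' * Vbar x'))| := by
          refine (Finset.abs_sum_le_sum_abs _ _).trans (Finset.sum_le_sum fun a _ => ?_)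
          rw [abs_mul, abs_of_nonneg ((hπbar (φ s)).1 a)]
      _ ≤ ∑ a, πbar (φ s) a * (c s a + γ * ∑ s', P s a s' * g s') :=
          Finset.sum_le_sum fun a _ =>
            mul_le_mul_of_nonneg_left (hterm a) ((hπbar (φ s)).1 a)
      _ = (∑ a, πbar (φ s) a * c s a) +
          γ * ∑ a, πbar (φ s) a * ∑ s', P s a s' * g s' := by
          calc ∑ a, πbar (φ s) a * (c s a + γ * ∑ s', P s a s' * g s')
              = ∑ a, (πbar (φ s) a * c s a +
                γ * (πbar (φ s) a * ∑ s', P s a s' * g s')) :=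
                Finset.sum_congr rfl fun a _ => by ring
            _ = _ := by rw [Finset.sum_add_distrib, Finset.mul_sum]
  -- expected gap bound
  set E : ℝ := ∑ s, ξ s * g s with hE
  have bound1 : (∑ s, ξ s * ∑ a, πbar (φ s) a * c s a) ≤ D * (LR + γ * KV * LP) := by
    calc ∑ s, ξ s * ∑ a, πbar (φ s) a * c s a
        = ∑ s, ∑ a, ξ s * (πbar (φ s) a * c s a) :=
          Finset.sum_congr rfl fun s _ => Finset.mul_sum _ _ _
      _ ≤ ∑ s, ∑ a, ξ s * ((D * πb s a) * c s a) :=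
          Finset.sum_le_sum fun s _ => Finset.sum_le_sum fun a _ =>
            mul_le_mul_of_nonneg_left
              (mul_le_mul_of_nonneg_right (hDbound s a) (hc0 s a)) (hξ.1 s)
      _ = D * (LR + γ * KV * LP) := by
          rw [hLR, hLP]
          simp only [hc, mul_add, Finset.mul_sum, ← Finset.sum_add_distrib]
          exact Finset.sum_congr rfl fun s _ => Finset.sum_congr rfl fun a _ => by ring
  have bound2 : (∑ s, ξ s * ∑ a, πbar (φ s) a * ∑ s', P s a s' * g s') ≤ D * E := by
    calc ∑ s, ξ s * ∑ a, πbar (φ s) a * ∑ s', P s a s' * g s'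
        = ∑ s, ∑ a, ξ s * (πbar (φ s) a * ∑ s', P s a s' * g s') :=
          Finset.sum_congr rfl fun s _ => Finset.mul_sum _ _ _
      _ ≤ ∑ s, ∑ a, ξ s * ((D * πb s a) * ∑ s', P s a s' * g s') := by
          refine Finset.sum_le_sum fun s _ => Finset.sum_le_sum fun a _ => ?_
          have hPg : 0 ≤ ∑ s', P s a s' * g s' :=
            Finset.sum_nonneg fun s' _ => mul_nonneg ((hP s a).1 s') (hgnn s')
          exact mul_le_mul_of_nonneg_left
            (mul_le_mul_of_nonneg_right (hDbound s a) hPg) (hξ.1 s)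
      _ = ∑ s, ∑ a, ∑ s', D * (ξ s * πb s a * P s a s' * g s') := by
          refine Finset.sum_congr rfl fun s _ => Finset.sum_congr rfl fun a _ => ?_
          rw [← mul_assoc, Finset.mul_sum]
          exact Finset.sum_congr rfl fun s' _ => by ring
      _ = ∑ s', ∑ s, ∑ a, D * (ξ s * πb s a * P s a s' * g s') := by
          rw [show (∑ s, ∑ a, ∑ s', D * (ξ s * πb s a * P s a s' * g s'))
              = ∑ s, ∑ s', ∑ a, D * (ξ s * πb s a * P s a s' * g s') from
            Finset.sum_congr rfl fun s _ => Finset.sum_comm]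
          exact Finset.sum_comm
      _ = D * ∑ s', (∑ s, ∑ a, ξ s * πb s a * P s a s') * g s' := by
          rw [Finset.mul_sum]
          refine Finset.sum_congr rfl fun s' _ => ?_
          rw [Finset.sum_mul, Finset.mul_sum]
          refine Finset.sum_congr rfl fun s _ => ?_
          rw [Finset.sum_mul, Finset.mul_sum]
      _ = D * E := by
          rw [hE]
          congr 1
          exact Finset.sum_congr rfl fun s' _ => by rw [hstat s']
  have hE1 : E ≤ D * (LR + γ * KV * LP) + γ * (D * E) := by
    have step1 : E ≤ ∑ s, ξ s * ((∑ a, πbar (φ s) a * c s a) +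
        γ * ∑ a, πbar (φ s) a * ∑ s', P s a s' * g s') :=
      Finset.sum_le_sum fun s _ => mul_le_mul_of_nonneg_left (hkey s) (hξ.1 s)
    have hsplit : (∑ s, ξ s * ((∑ a, πbar (φ s) a * c s a) +
        γ * ∑ a, πbar (φ s) a * ∑ s', P s a s' * g s'))
        = (∑ s, ξ s * ∑ a, πbar (φ s) a * c s a) +
          γ * ∑ s, ξ s * ∑ a, πbar (φ s) a * ∑ s', P s a s' * g s' := by
      calc ∑ s, ξ s * ((∑ a, πbar (φ s) a * c s a) +
            γ * ∑ a, πbar (φ s) a * ∑ s', P s a s' * g s')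
          = ∑ s, (ξ s * ∑ a, πbar (φ s) a * c s a +
            γ * (ξ s * ∑ a, πbar (φ s) a * ∑ s', P s a s' * g s')) :=
            Finset.sum_congr rfl fun s _ => by ring
        _ = _ := by rw [Finset.sum_add_distrib, Finset.mul_sum]
    calc E ≤ _ := step1
      _ = _ := hsplit
      _ ≤ D * (LR + γ * KV * LP) + γ * (D * E) :=
        add_le_add bound1 (mul_le_mul_of_nonneg_left bound2 hγ0)
  have hEbound : E ≤ D * (LR + γ * KV * LP) / (1 - γ * D) := by
    rw [le_div_iff₀ h1γD]
    nlinarith [hE1]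
  -- Markov inequality step
  set F : Finset S := (Finset.univ : Finset S).filter
    (fun s => ε / 2 < |V s - Vbar (φ s)|) with hF
  have hmarkov : (∑ s ∈ F, ξ s) ≤ (2 / ε) * E := by
    calc ∑ s ∈ F, ξ s
        ≤ ∑ s ∈ F, (2 / ε) * (ξ s * g s) := by
          refine Finset.sum_le_sum fun s hs => ?_
          have hgs : ε / 2 < g s := by
            rw [hF] at hs
            exact (Finset.mem_filter.mp hs).2
          have h1 : ξ s * (ε / 2) ≤ ξ s * g s :=
            mul_le_mul_of_nonneg_left hgs.le (hξ.1 s)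
          have h2 : (2 / ε) * (ξ s * (ε / 2)) = ξ s := by field_simp
          calc ξ s = (2 / ε) * (ξ s * (ε / 2)) := h2.symm
            _ ≤ (2 / ε) * (ξ s * g s) :=
              mul_le_mul_of_nonneg_left h1 (by positivity)
      _ = (2 / ε) * ∑ s ∈ F, ξ s * g s := (Finset.mul_sum _ _ _).symm
      _ ≤ (2 / ε) * E := by
          refine mul_le_mul_of_nonneg_left ?_ (by positivity)
          rw [hE, hF]
          exact Finset.sum_le_sum_of_subset_of_nonneg (Finset.filter_subset _ _)
            fun s _ _ => mul_nonneg (hξ.1 s) (hgnn s)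
  refine hmarkov.trans ?_
  have hfin : (2 / ε) * E ≤ (2 / ε) * (D * (LR + γ * KV * LP) / (1 - γ * D)) :=
    mul_le_mul_of_nonneg_left hEbound (by positivity)
  refine hfin.trans (le_of_eq ?_)
  have hDne : D ≠ 0 := ne_of_gt hD0
  have hεne : ε ≠ 0 := ne_of_gt hε
  have h1γDne : (1 - γ * D) ≠ 0 := ne_of_gt h1γD
  rw [show 1 / D - γ = (1 - γ * D) / D from by field_simp]
  field_simp
end
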